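/- Let R be a field of characteristic zero, n ≥ 3, and let φ = Λ ∘ σ^m ∘ ψ_D ∘ Δ be an automorphism of UT_n(R), where Λ is a central automorphism, σ is the flip automorphism, m ∈ {0,1}, ψ_D is a diagonal automorphism, and Δ is a ring automorphism. If R(φ) < ∞, then all central elements of UT_n(R) (i.e. all matrices T_{1,n}(a) = I_n + a·E_{1,n}, a ∈ R) are pairwise φ-conjugate. -/

import Mathlib

open Matrix

/-- `x` and `y` are twisted conjugate with respect to the automorphism `φ`,
i.e. `x = z * y * (φ z)⁻¹` for some `z`. -/
def TwistedConj {G : Type*} [Group G] (φ : G ≃* G) (x y : G) : Prop :=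
  ∃ z : G, x = z * y * (φ z)⁻¹

/-- The Reidemeister number of an automorphism: the number of twisted conjugacy classes,
as an element of `ℕ∞ = ℕ ∪ {∞}` (`⊤` meaning infinitely many classes). -/
noncomputable def reidemeisterNumber {G : Type*} [Group G] (φ : G ≃* G) : ℕ∞ :=
  Cardinal.toENat (Cardinal.mk (Quot (TwistedConj φ)))

/-- A matrix is (upper) unitriangular if it has `1` on the diagonal and `0` below it. -/
def Matrix.IsUnitriangular {n : ℕ} {R : Type*} [CommRing R]
    (M : Matrix (Fin n) (Fin n) R) : Prop :=
  (∀ i, M i i = 1) ∧ ∀ ⦃i j : Fin n⦄, j < i → M i j = 0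

namespace Matrix.IsUnitriangular

variable {n : ℕ} {R : Type*} [CommRing R] {M N : Matrix (Fin n) (Fin n) R}

theorem blockTriangular (h : M.IsUnitriangular) : M.BlockTriangular (id : Fin n → Fin n) :=
  fun _ _ hij => h.2 hij

theorem one : (1 : Matrix (Fin n) (Fin n) R).IsUnitriangular :=
  ⟨fun i => by simp, fun i j hij => by simp [Matrix.one_apply, (ne_of_lt hij).symm]⟩

theorem diag_mul (hM : M.IsUnitriangular) (hN : N.BlockTriangular (id : Fin n → Fin n))
    (i : Fin n) : (M * N) i i = N i i := by
  rw [Matrix.mul_apply, Finset.sum_eq_single i]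
  · rw [hM.1 i, one_mul]
  · intro k _ hk
    rcases lt_or_gt_of_ne hk with hlt | hgt
    · rw [hM.2 hlt, zero_mul]
    · rw [hN (show (id i : Fin n) < id k from hgt), mul_zero]
  · intro h; exact absurd (Finset.mem_univ i) h

theorem mul (hM : M.IsUnitriangular) (hN : N.IsUnitriangular) : (M * N).IsUnitriangular := by
  constructor
  · intro i
    rw [hM.diag_mul hN.blockTriangular i, hN.1 i]
  · intro i j hij
    rw [Matrix.mul_apply]
    refine Finset.sum_eq_zero fun k _ => ?_
    rcases lt_or_ge k i with hk | hk
    · rw [hM.2 hk, zero_mul]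
    · rw [hN.2 (lt_of_lt_of_le hij hk), mul_zero]

end Matrix.IsUnitriangular

/-- The group `UT n R` of upper unitriangular `n × n` matrices over `R`, realized as a
subgroup of the group of units of the matrix ring. -/
def UT (n : ℕ) (R : Type*) [CommRing R] : Subgroup (Matrix (Fin n) (Fin n) R)ˣ where
  carrier := {u | Matrix.IsUnitriangular (u : Matrix (Fin n) (Fin n) R)}
  one_mem' := by simpa using Matrix.IsUnitriangular.one
  mul_mem' := by
    intro a b ha hb
    simpa using ha.mul hb
  inv_mem' := by
    intro u hu
    have hdet : IsUnit ((u : Matrix (Fin n) (Fin n) R)).det :=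
      (Matrix.isUnit_iff_isUnit_det _).mp u.isUnit
    haveI : Invertible (u : Matrix (Fin n) (Fin n) R) := u.invertible
    have htri : ((u : Matrix (Fin n) (Fin n) R)⁻¹).BlockTriangular (id : Fin n → Fin n) :=
      Matrix.blockTriangular_inv_of_blockTriangular hu.blockTriangular
    have hval : ((u⁻¹ : (Matrix (Fin n) (Fin n) R)ˣ) : Matrix (Fin n) (Fin n) R)
        = (u : Matrix (Fin n) (Fin n) R)⁻¹ := by
      simp [Matrix.coe_units_inv]
    constructor
    · intro i
      have h1 : ((u : Matrix (Fin n) (Fin n) R) * (u : Matrix (Fin n) (Fin n) R)⁻¹) i i = 1 := by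
        rw [Matrix.mul_nonsing_inv _ hdet]; simp
      rw [hval]
      rw [hu.diag_mul htri i] at h1
      exact h1
    · intro i j hij
      rw [hval]
      exact htri hij

/-- The underlying matrix of an element of `UT n R`. -/
def UTmat {n : ℕ} {R : Type*} [CommRing R] (X : UT n R) : Matrix (Fin n) (Fin n) R :=
  ((X : (Matrix (Fin n) (Fin n) R)ˣ) : Matrix (Fin n) (Fin n) R)

section Generators

variable {n : ℕ} {R : Type*} [CommRing R]

theorem TU_mul_aux (i j : Fin n) (h : i < j) (x : R) :
    (1 + Matrix.single i j x) * (1 + Matrix.single i j (-x)) = 1 := by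
  have h0 : Matrix.single i j x * Matrix.single i j (-x) = 0 :=
    Matrix.single_mul_single_of_ne x i j i (ne_of_lt h).symm (-x)
  have h1 : Matrix.single i j x + Matrix.single i j (-x) = 0 := by
    rw [← Matrix.single_add]; simp
  calc (1 + Matrix.single i j x) * (1 + Matrix.single i j (-x))
      = 1 + (Matrix.single i j x + Matrix.single i j (-x))
        + Matrix.single i j x * Matrix.single i j (-x) := by noncomm_ring
    _ = 1 := by rw [h1, h0, add_zero, add_zero]

theorem TU_isUnitriangular (i j : Fin n) (h : i < j) (x : R) :
    ((1 + Matrix.single i j x) : Matrix (Fin n) (Fin n) R).IsUnitriangular := by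
  constructor
  · intro k
    rw [Matrix.add_apply, Matrix.one_apply_eq,
      Matrix.single_apply_of_ne i j x k k (by rintro ⟨rfl, rfl⟩; exact lt_irrefl _ h)]
    ring
  · intro k l hkl
    rw [Matrix.add_apply, Matrix.one_apply_ne (ne_of_gt hkl),
      Matrix.single_apply_of_ne i j x k l
        (by rintro ⟨rfl, rfl⟩; exact absurd h (not_lt.mpr hkl.le))]
    ring

/-- The elementary unitriangular matrix `T_{i,j}(x) = I + x·E_{i,j}` as an element of
`UT n R` (with junk value `1` when `¬ i < j`). -/
noncomputable def TU (i j : Fin n) (x : R) : UT n R :=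
  if h : i < j then
    ⟨⟨1 + Matrix.single i j x, 1 + Matrix.single i j (-x),
      TU_mul_aux i j h x, by simpa using TU_mul_aux i j h (-x)⟩, TU_isUnitriangular i j h x⟩
  else 1

/-- `ψ` is the diagonal automorphism `X ↦ D X D⁻¹` associated to a diagonal matrix `D`
with unit diagonal entries. -/
def IsDiagonalAut (ψ : MulAut (UT n R)) : Prop :=
  ∃ d : Fin n → Rˣ, ∀ X : UT n R,
    UTmat (ψ X) = Matrix.diagonal (fun i => (d i : R)) * UTmat X
      * Matrix.diagonal (fun i => (((d i)⁻¹ : Rˣ) : R))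

/-- `Δ` is the ring automorphism of `UT n R` induced entrywise by a ring automorphism of `R`. -/
def IsRingAut (Δ : MulAut (UT n R)) : Prop :=
  ∃ δ : R ≃+* R, ∀ (X : UT n R) (i j : Fin n), UTmat (Δ X) i j = δ (UTmat X i j)

/-- `σ` is the flip automorphism: reflect the matrix across the antidiagonal, then invert. -/
def IsFlipAut (σ : MulAut (UT n R)) : Prop :=
  ∀ X : UT n R, UTmat (σ X) = (Matrix.of fun i j : Fin n => UTmat X j.rev i.rev)⁻¹

/-- `Λ` is a central automorphism: there is an additive endomorphism `λ` of `R` such that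
`Λ(T_{i,i+1}(x)) = T_{i,i+1}(x) · T_{1,n}(λ(x))` on the generators. -/
noncomputable def IsCentralAut (h0 : 0 < n) (Λ : MulAut (UT n R)) : Prop :=
  ∃ lam : R →+ R, ∀ i j : Fin n, (j : ℕ) = (i : ℕ) + 1 → ∀ x : R,
    Λ (TU i j x) = TU i j x * TU ⟨0, h0⟩ ⟨n - 1, Nat.sub_lt h0 Nat.one_pos⟩ (lam x)

end Generators


section Aux

variable {R : Type} [Field R] {n : ℕ}

theorem UTmat_mul (X Y : UT n R) : UTmat (X * Y) = UTmat X * UTmat Y := rfl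

theorem UTmat_inj {X Y : UT n R} (h : UTmat X = UTmat Y) : X = Y :=
  Subtype.ext (Units.ext h)

theorem UTmat_TU {i j : Fin n} (h : i < j) (x : R) :
    UTmat (TU i j x) = 1 + Matrix.single i j x := by
  rw [TU, dif_pos h]; rfl

variable (hn : 3 ≤ n)

/-- `T_{1,n}(a)` as element of `UT n R`. -/
noncomputable def Tc (a : R) : UT n R := TU ⟨0, by omega⟩ ⟨n - 1, by omega⟩ a

theorem i0_lt_j0 : (⟨0, by omega⟩ : Fin n) < ⟨n - 1, by omega⟩ := by
  simp only [Fin.lt_def]; omega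

theorem UTmat_Tc (a : R) :
    UTmat (Tc hn a) = 1 + Matrix.single ⟨0, by omega⟩ ⟨n - 1, by omega⟩ a :=
  UTmat_TU (i0_lt_j0 hn) a

theorem Tc_apply (a : R) :
    UTmat (Tc hn a) (⟨0, by omega⟩ : Fin n) (⟨n - 1, by omega⟩ : Fin n) = a := by
  rw [UTmat_Tc hn a, Matrix.add_apply, Matrix.one_apply_ne (ne_of_lt (i0_lt_j0 hn)),
    Matrix.single_apply_same, zero_add]

theorem i0_ne_j0 : (⟨0, by omega⟩ : Fin n) ≠ ⟨n - 1, by omega⟩ :=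
  ne_of_lt (i0_lt_j0 hn)

theorem Tc_add (a b : R) : Tc hn (a + b) = Tc hn a * Tc hn b := by
  apply UTmat_inj
  rw [UTmat_mul, UTmat_Tc, UTmat_Tc, UTmat_Tc]
  have h0 : Matrix.single (⟨0, by omega⟩ : Fin n) (⟨n - 1, by omega⟩ : Fin n) a *
      Matrix.single ⟨0, by omega⟩ ⟨n - 1, by omega⟩ b = 0 :=
    Matrix.single_mul_single_of_ne a _ _ _ (i0_ne_j0 hn).symm b
  have h1 : (1 + Matrix.single (⟨0, by omega⟩ : Fin n) (⟨n - 1, by omega⟩ : Fin n) a) *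
      (1 + Matrix.single (⟨0, by omega⟩ : Fin n) (⟨n - 1, by omega⟩ : Fin n) b) =
      1 + (Matrix.single (⟨0, by omega⟩ : Fin n) (⟨n - 1, by omega⟩ : Fin n) a +
        Matrix.single (⟨0, by omega⟩ : Fin n) (⟨n - 1, by omega⟩ : Fin n) b) +
      Matrix.single (⟨0, by omega⟩ : Fin n) (⟨n - 1, by omega⟩ : Fin n) a *
        Matrix.single (⟨0, by omega⟩ : Fin n) (⟨n - 1, by omega⟩ : Fin n) b := by
    noncomm_ring
  rw [h1, h0, add_zero, Matrix.single_add]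

theorem Tc_zero : Tc hn (0 : R) = 1 := by
  apply UTmat_inj
  rw [UTmat_Tc]
  simp [UTmat]

theorem Tc_neg (a : R) : Tc hn (-a) = (Tc hn a)⁻¹ := by
  have : Tc hn (-a) * Tc hn a = 1 := by rw [← Tc_add, neg_add_cancel, Tc_zero]
  exact eq_inv_of_mul_eq_one_left this

theorem Tc_mem_center (a : R) : Tc hn a ∈ Subgroup.center (UT n R) := by
  rw [Subgroup.mem_center_iff]
  intro g
  apply UTmat_inj
  rw [UTmat_mul, UTmat_mul, UTmat_Tc]
  set i0 : Fin n := ⟨0, by omega⟩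
  set j0 : Fin n := ⟨n - 1, by omega⟩
  have hg : (UTmat g).IsUnitriangular := g.2
  have key : UTmat g * Matrix.single i0 j0 a =
      Matrix.single i0 j0 a * UTmat g := by
    ext p q
    by_cases hp : p = i0
    · subst hp
      by_cases hq : q = j0
      · subst hq
        rw [Matrix.mul_single_apply_same, Matrix.single_mul_apply_same,
          hg.1, hg.1, one_mul, mul_one]
      · rw [Matrix.mul_single_apply_of_ne (hbj := hq),
          Matrix.single_mul_apply_same]
        have : UTmat g j0 q = 0 := by
          apply hg.2
          have hq' : (q : ℕ) ≠ n - 1 := fun h => hq (Fin.ext h)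
          have : (q : ℕ) < n := q.2
          simp only [Fin.lt_def, i0, j0]; omega
        rw [this, mul_zero]
    · rw [Matrix.single_mul_apply_of_ne (h := hp)]
      by_cases hq : q = j0
      · subst hq
        rw [Matrix.mul_single_apply_same]
        have : UTmat g p i0 = 0 := by
          apply hg.2
          have hp' : (p : ℕ) ≠ 0 := fun h => hp (Fin.ext h)
          simp only [Fin.lt_def, i0, j0]; omega
        rw [this, zero_mul]
      · rw [Matrix.mul_single_apply_of_ne (hbj := hq)]
  rw [mul_add, add_mul, mul_one, one_mul, key]

theorem center_eq_Tc (A : UT n R) (hA : A ∈ Subgroup.center (UT n R)) :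
    A = Tc hn (UTmat A ⟨0, by omega⟩ ⟨n - 1, by omega⟩) := by
  set M := UTmat A with hMdef
  have hM : M.IsUnitriangular := A.2
  have comm : ∀ (k : ℕ) (hk : k + 1 < n),
      Matrix.single (⟨k, by omega⟩ : Fin n) (⟨k + 1, hk⟩ : Fin n) (1 : R) * M =
      M * Matrix.single ⟨k, by omega⟩ ⟨k + 1, hk⟩ 1 := by
    intro k hk
    have hij : (⟨k, by omega⟩ : Fin n) < ⟨k + 1, hk⟩ := by simp [Fin.lt_def]
    have h := Subgroup.mem_center_iff.mp hA (TU ⟨k, by omega⟩ ⟨k + 1, hk⟩ 1)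
    have h2 := congrArg UTmat h
    rw [UTmat_mul, UTmat_mul, UTmat_TU hij] at h2
    rw [add_mul, one_mul, mul_add, mul_one] at h2
    exact add_left_cancel h2
  have claim_col : ∀ (k : ℕ) (hk : k + 1 < n) (p : Fin n),
      p ≠ ⟨k, by omega⟩ → M p ⟨k, by omega⟩ = 0 := by
    intro k hk p hp
    have h := congrFun (congrFun (comm k hk) p) ⟨k + 1, hk⟩
    rw [Matrix.single_mul_apply_of_ne (h := hp),
      Matrix.mul_single_apply_same, mul_one] at h
    exact h.symm
  have claim_row : ∀ (k : ℕ) (hk : k + 1 < n) (q : Fin n),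
      q ≠ ⟨k + 1, hk⟩ → M ⟨k + 1, hk⟩ q = 0 := by
    intro k hk q hq
    have h := congrFun (congrFun (comm k hk) ⟨k, by omega⟩) q
    rw [Matrix.single_mul_apply_same, one_mul,
      Matrix.mul_single_apply_of_ne (hbj := hq)] at h
    exact h
  apply UTmat_inj
  rw [UTmat_Tc]
  set i0 : Fin n := ⟨0, by omega⟩
  set j0 : Fin n := ⟨n - 1, by omega⟩
  ext p q
  rw [← hMdef, Matrix.add_apply]
  by_cases hpq : p = q
  · subst hpq
    rw [hM.1 p, Matrix.one_apply_eq]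
    by_cases h1 : p = i0
    · rw [Matrix.single_apply_of_ne]
      · ring
      · rintro ⟨h2, h3⟩; exact (i0_ne_j0 hn) (h2.trans h3.symm)
    · rw [Matrix.single_apply_of_ne]
      · ring
      · rintro ⟨h, _⟩; exact h1 h.symm
  · rw [Matrix.one_apply_ne hpq]
    by_cases hq : (q : ℕ) < n - 1
    · -- column q is covered
      have hk : (q : ℕ) + 1 < n := by omega
      have hq' : (⟨(q : ℕ), by omega⟩ : Fin n) = q := rfl
      have := claim_col q hk p (by rw [hq']; exact hpq)
      rw [hq'] at this
      rw [this]
      rw [Matrix.single_apply_of_ne]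
      · ring
      · rintro ⟨-, rfl⟩
        simp only [j0] at hq; omega
    · -- q = j0
      have hqj : q = j0 := by
        apply Fin.ext
        have := q.2
        simp only [j0]; omega
      subst hqj
      by_cases hp : p = i0
      · subst hp
        rw [Matrix.single_apply_same]; ring
      · have hp0 : 0 < (p : ℕ) := by
          rcases Nat.eq_zero_or_pos (p : ℕ) with h | h
          · exact absurd (Fin.ext h : p = i0) hp
          · exact h
        have hk : ((p : ℕ) - 1) + 1 < n := by have := p.2; omega
        have hp' : (⟨(p : ℕ) - 1 + 1, hk⟩ : Fin n) = p := by apply Fin.ext; simp; omega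
        have := claim_row ((p : ℕ) - 1) hk j0 (by rw [hp']; exact fun h => hpq h.symm)
        rw [hp'] at this
        rw [this, Matrix.single_apply_of_ne]
        · ring
        · rintro ⟨rfl, -⟩; exact hp rfl

theorem twistedConj_equivalence {G : Type*} [Group G] (φ : G ≃* G) :
    Equivalence (TwistedConj φ) := by
  constructor
  · intro x; exact ⟨1, by simp⟩
  · rintro x y ⟨z, rfl⟩
    refine ⟨z⁻¹, ?_⟩
    rw [_root_.map_inv]
    group
  · rintro x y w ⟨z, rfl⟩ ⟨v, hv⟩
    refine ⟨z * v, ?_⟩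
    rw [hv, _root_.map_mul]
    group

end Aux

/-- Let `R` be a field of characteristic zero, `n ≥ 3`, and `φ = Λ ∘ σ^m ∘ ψ_D ∘ Δ` an
automorphism of `UT n R` with finite Reidemeister number. Then all central elements of
`UT n R` are pairwise `φ`-conjugate. -/
theorem central_elements_twisted_conj
    {R : Type} [Field R] [CharZero R] {n : ℕ} (hn : 3 ≤ n)
    (Λ σ ψ Δ : MulAut (UT n R)) (m : ℕ) (hm : m ≤ 1)
    (hΛ : IsCentralAut (show 0 < n by omega) Λ) (hσ : IsFlipAut σ)
    (hψ : IsDiagonalAut ψ) (hΔ : IsRingAut Δ)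
    (φ : MulAut (UT n R)) (hφ : φ = Λ * σ ^ m * ψ * Δ)
    (hfin : reidemeisterNumber (φ : (UT n R) ≃* (UT n R)) ≠ ⊤) :
    ∀ A B : UT n R, A ∈ Subgroup.center (UT n R) → B ∈ Subgroup.center (UT n R) →
      ∃ X : UT n R, A = X⁻¹ * B * φ X := by
  classical
  intro A B hA hB
  set φ' : (UT n R) ≃* (UT n R) := (φ : (UT n R) ≃* (UT n R)) with hφ'
  -- The additive subgroup W = { c | T(c) = X⁻¹ * φ X for some X }
  let W : AddSubgroup R :=
    { carrier := {c : R | ∃ X : UT n R, Tc hn c = X⁻¹ * φ' X}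
      zero_mem' := ⟨1, by simp [Tc_zero hn]⟩
      add_mem' := by
        rintro a b ⟨X, hX⟩ ⟨Y, hY⟩
        refine ⟨X * Y, ?_⟩
        have hc := Subgroup.mem_center_iff.mp (Tc_mem_center hn a) Y⁻¹
        have h1 : (X * Y)⁻¹ * φ' (X * Y) = Y⁻¹ * (X⁻¹ * φ' X) * φ' Y := by
          rw [_root_.map_mul, _root_.mul_inv_rev]; group
        rw [h1, ← hX]
        have h2 : Y⁻¹ * Tc hn a * φ' Y = Tc hn a * (Y⁻¹ * φ' Y) := by
          rw [hc, mul_assoc]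
        rw [h2, ← hY, ← Tc_add hn]
      neg_mem' := by
        rintro a ⟨X, hX⟩
        refine ⟨X⁻¹, ?_⟩
        have hφX : φ' X = X * Tc hn a := by rw [hX]; group
        have hc : X * (Tc hn a)⁻¹ = (Tc hn a)⁻¹ * X := by
          rw [← Tc_neg hn]
          exact Subgroup.mem_center_iff.mp (Tc_mem_center hn (-a)) X
        have : (X⁻¹)⁻¹ * φ' (X⁻¹) = Tc hn (-a) := by
          calc (X⁻¹)⁻¹ * φ' (X⁻¹) = X * (φ' X)⁻¹ := by rw [_root_.map_inv]; group
            _ = X * (Tc hn a)⁻¹ * X⁻¹ := by rw [hφX]; group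
            _ = (Tc hn a)⁻¹ * X * X⁻¹ := by rw [hc]
            _ = Tc hn (-a) := by rw [Tc_neg hn]; group
        exact this.symm }
  have hmemW : ∀ c : R, c ∈ W ↔ ∃ X : UT n R, Tc hn c = X⁻¹ * φ' X := fun c => Iff.rfl
  -- membership in W gives twisted conjugacy of corresponding central elements
  have hconj_of_mem : ∀ a b : R, a - b ∈ W → TwistedConj φ' (Tc hn a) (Tc hn b) := by
    intro a b hab
    obtain ⟨X, hX⟩ := (hmemW (a - b)).mp hab
    refine ⟨X⁻¹, ?_⟩
    rw [_root_.map_inv, inv_inv]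
    have hc := Subgroup.mem_center_iff.mp (Tc_mem_center hn b) X⁻¹
    have h1 : X⁻¹ * Tc hn b * φ' X = Tc hn b * (X⁻¹ * φ' X) := by rw [hc, mul_assoc]
    rw [h1, ← hX, ← Tc_add hn]
    congr 1; ring
  have hmem_of_conj : ∀ a b : R, TwistedConj φ' (Tc hn a) (Tc hn b) → a - b ∈ W := by
    rintro a b ⟨z, hz⟩
    rw [hmemW]
    refine ⟨z⁻¹, ?_⟩
    rw [_root_.map_inv, inv_inv]
    have hc := Subgroup.mem_center_iff.mp (Tc_mem_center hn b) z
    rw [hc, mul_assoc] at hz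
    have h3 : Tc hn b * Tc hn (a - b) = Tc hn a := by
      rw [← Tc_add hn]; congr 1; ring
    exact mul_left_cancel (h3.trans hz)
  -- finiteness of the twisted conjugacy class set
  have hFin : Finite (Quot (TwistedConj φ')) := by
    rw [reidemeisterNumber, ne_eq, Cardinal.toENat_eq_top] at hfin
    exact Cardinal.mk_lt_aleph0_iff.mp (lt_of_not_ge hfin)
  -- hence R ⧸ W is finite
  have hQfin : Finite (R ⧸ W) := by
    let q : R ⧸ W → Quot (TwistedConj φ') :=
      Quotient.lift (fun c => Quot.mk (TwistedConj φ') (Tc hn c)) (by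
        intro a b hab
        have h1 : -a + b ∈ W := QuotientAddGroup.leftRel_apply.mp hab
        have h2 : b - a ∈ W := by rwa [← neg_add_eq_sub]
        exact (Quot.sound (hconj_of_mem b a h2)).symm)
    have hq : Function.Injective q := by
      intro x y
      induction x using Quotient.inductionOn with | h a =>
      induction y using Quotient.inductionOn with | h b =>
      intro hxy
      have h' : Quot.mk (TwistedConj φ') (Tc hn a) = Quot.mk (TwistedConj φ') (Tc hn b) := hxy
      have h2 : TwistedConj φ' (Tc hn a) (Tc hn b) :=
        ((twistedConj_equivalence φ').eqvGen_iff).mp (Quot.eqvGen_exact h')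
      have h3 : a - b ∈ W := hmem_of_conj a b h2
      apply Quotient.sound
      refine QuotientAddGroup.leftRel_apply.mpr ?_
      rw [neg_add_eq_sub, ← neg_sub a b]
      exact W.neg_mem h3
    exact Finite.of_injective q hq
  -- divisibility: every element of R lies in W
  have hall : ∀ c : R, c ∈ W := by
    intro c
    have h0 : Nat.card (R ⧸ W) ≠ 0 := Nat.card_pos.ne'
    set N := Nat.card (R ⧸ W) with hN
    have hNR : (N : R) ≠ 0 := Nat.cast_ne_zero.mpr h0
    have h2 : N • (c / (N : R)) = c := by
      rw [nsmul_eq_mul]; field_simp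
    have h1 : (QuotientAddGroup.mk c : R ⧸ W) = 0 := by
      rw [← h2]
      have h3 : (QuotientAddGroup.mk (N • (c / (N : R))) : R ⧸ W)
          = N • (QuotientAddGroup.mk (c / (N : R)) : R ⧸ W) :=
        AddMonoidHom.map_nsmul (QuotientAddGroup.mk' W) N (c / (N : R))
      rw [h3, card_nsmul_eq_zero']
    exact (QuotientAddGroup.eq_zero_iff c).mp h1
  -- conclusion
  have hA' := center_eq_Tc hn A hA
  have hB' := center_eq_Tc hn B hB
  set a := UTmat A ⟨0, by omega⟩ ⟨n - 1, by omega⟩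
  set b := UTmat B ⟨0, by omega⟩ ⟨n - 1, by omega⟩
  obtain ⟨X, hX⟩ := (hmemW (a - b)).mp (hall (a - b))
  refine ⟨X, ?_⟩
  rw [hA', hB']
  have hc := Subgroup.mem_center_iff.mp (Tc_mem_center hn b) X⁻¹
  calc Tc hn a = Tc hn b * Tc hn (a - b) := by rw [← Tc_add hn]; congr 1; ring
    _ = Tc hn b * (X⁻¹ * φ' X) := by rw [← hX]
    _ = X⁻¹ * Tc hn b * φ' X := by rw [← mul_assoc, ← hc]
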